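/- Let G be a tree grammar with finitely many nonterminals and finitely many rules, and cost function with cost(r) > 0 for every rule r. Let p be a program generated from a nonterminal X, let n be a node of the derivation tree of p, and let Y be the left-hand nonterminal of the rule labeling n, so that the subprogram p_n is generated from Y. If p_n has a successor wrt Y, then p has a successor wrt X, and cost-succ_X(p) − cost(p) ≤ cost-succ_Y(p_n) − cost(p_n). -/

import Mathlib

/-- Finitely-branching trees with nodes labeled by elements of `R` (derivation trees). -/
inductive Tree' (R : Type) : Type
  | node : R → List (Tree' R) → Tree' R

/-- The label of the root node. -/
def Tree'.rootLabel {R : Type} : Tree' R → R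
  | .node r _ => r

/-- A tree grammar: nonterminals `Γ`, derivation rules `R`, each rule having a
left-hand nonterminal and a list of argument nonterminals. -/
structure TreeGrammar where
  Γ : Type
  R : Type
  lhs : R → Γ
  args : R → List Γ

/-- Well-formed derivation trees (programs) of a tree grammar. -/
inductive TreeGrammar.WF (G : TreeGrammar) : Tree' G.R → Prop
  | node (r : G.R) (ts : List (Tree' G.R))
      (hlen : ts.length = (G.args r).length)
      (hwf : ∀ t ∈ ts, G.WF t)
      (hlhs : ∀ i : ℕ, (h : i < ts.length) →
        G.lhs (ts[i].rootLabel) = (G.args r)[i]'(hlen ▸ h)) :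
      G.WF (Tree'.node r ts)

/-- `p` is a program generated from the nonterminal `X`. -/
def TreeGrammar.GenFrom (G : TreeGrammar) (X : G.Γ) (p : Tree' G.R) : Prop :=
  G.WF p ∧ G.lhs p.rootLabel = X

/-- The cost of a program, extending a cost function on rules. -/
def costP {R : Type} (cost : R → ℝ) : Tree' R → ℝ
  | .node r ts => cost r + (ts.attach.map (fun t => costP cost t.1)).sum
decreasing_by
  have := List.sizeOf_lt_of_mem t.2
  simp only [Tree'.node.sizeOf_spec]
  omega

/-- The number of nodes of a derivation tree. -/
def sizeP {R : Type} : Tree' R → ℕ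
  | .node _ ts => 1 + (ts.attach.map (fun t => sizeP t.1)).sum
decreasing_by
  have := List.sizeOf_lt_of_mem t.2
  simp only [Tree'.node.sizeOf_spec]
  omega

/-- The depth of a derivation tree: number of nodes on a longest root-to-leaf path. -/
def depthP {R : Type} : Tree' R → ℕ
  | .node _ ts => 1 + (ts.attach.map (fun t => depthP t.1)).foldr max 0
decreasing_by
  have := List.sizeOf_lt_of_mem t.2
  simp only [Tree'.node.sizeOf_spec]
  omega

/-- `p'` is a successor of `p` with respect to the nonterminal `X`:
`p'` is generated from `X`, has strictly larger cost than `p`, and no program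
generated from `X` has cost strictly between the two. -/
def IsSucc (G : TreeGrammar) (cost : G.R → ℝ) (X : G.Γ) (p p' : Tree' G.R) : Prop :=
  G.GenFrom X p' ∧ costP cost p < costP cost p' ∧
    ∀ p'', G.GenFrom X p'' →
      ¬(costP cost p < costP cost p'' ∧ costP cost p'' < costP cost p')

/-- `X` occurs as the left-hand nonterminal of the rule labeling some node of the tree. -/
inductive OccursLhs (G : TreeGrammar) (X : G.Γ) : Tree' G.R → Prop
  | here (r : G.R) (ts : List (Tree' G.R)) : G.lhs r = X → OccursLhs G X (.node r ts)
  | there (r : G.R) (ts : List (Tree' G.R)) (t : Tree' G.R) :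
      t ∈ ts → OccursLhs G X t → OccursLhs G X (.node r ts)

/-- Condition (*): along every root-to-leaf path, no nonterminal occurs twice as the
left-hand nonterminal of the rules labeling the nodes on the path. -/
inductive StarCond (G : TreeGrammar) : Tree' G.R → Prop
  | node (r : G.R) (ts : List (Tree' G.R))
      (hsub : ∀ t ∈ ts, StarCond G t)
      (hnew : ∀ t ∈ ts, ¬ OccursLhs G (G.lhs r) t) :
      StarCond G (.node r ts)

/-- `IsSubtree s t`: `s` is the subtree of `t` rooted at some node of `t`. -/
inductive IsSubtree {R : Type} : Tree' R → Tree' R → Prop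
  | refl (t : Tree' R) : IsSubtree t t
  | child (s : Tree' R) (r : R) (ts : List (Tree' R)) (t : Tree' R) :
      t ∈ ts → IsSubtree s t → IsSubtree s (.node r ts)

/-- `IsStrictSubtree s t`: `s` is the subtree of `t` rooted at a strict descendant
of the root of `t`. -/
inductive IsStrictSubtree {R : Type} : Tree' R → Tree' R → Prop
  | child (s : Tree' R) (r : R) (ts : List (Tree' R)) (t : Tree' R) :
      t ∈ ts → IsSubtree s t → IsStrictSubtree s (.node r ts)

/-- The subtree of a tree at a given position (a list of child indices), if it exists. -/
def subtreeAt {R : Type} : Tree' R → List ℕ → Option (Tree' R)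
  | t, [] => some t
  | .node _ ts, i :: is =>
      match ts[i]? with
      | some t => subtreeAt t is
      | none => none

/-- Replacing the subtree at a given position by `q`. -/
def replaceAt {R : Type} : Tree' R → List ℕ → Tree' R → Tree' R
  | _, [], q => q
  | .node r ts, i :: is, q =>
      match ts[i]? with
      | some t => .node r (ts.set i (replaceAt t is q))
      | none => .node r ts

open scoped ENNReal in
/-- The Bellman operator associated with a tree grammar and a cost function. -/
noncomputable def bellman (G : TreeGrammar) (cost : G.R → ℝ) (c : G.Γ → ℝ≥0∞) : G.Γ → ℝ≥0∞ :=
  fun X => ⨅ r ∈ {r : G.R | G.lhs r = X},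
    (ENNReal.ofReal (cost r) + ((G.args r).map c).sum)

/-! ### Auxiliary lemmas -/

/-- Induction principle for `Tree'`. -/
theorem Tree'.my_ind {R : Type} {P : Tree' R → Prop}
    (h : ∀ r ts, (∀ t ∈ ts, P t) → P (.node r ts)) : ∀ t, P t
  | .node r ts => h r ts (fun t ht => Tree'.my_ind h t)
decreasing_by
  have := List.sizeOf_lt_of_mem ht
  simp only [Tree'.node.sizeOf_spec]
  omega

theorem costP_node {R : Type} (cost : R → ℝ) (r : R) (ts : List (Tree' R)) :
    costP cost (.node r ts) = cost r + (ts.map (costP cost)).sum := by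
  rw [costP]
  exact congrArg _ (congrArg List.sum (List.attach_map_val (l := ts) (f := costP cost)))

theorem sizeP_node {R : Type} (r : R) (ts : List (Tree' R)) :
    sizeP (.node r ts) = 1 + (ts.map sizeP).sum := by
  rw [sizeP]
  exact congrArg _ (congrArg List.sum (List.attach_map_val (l := ts) (f := sizeP)))

theorem one_le_sizeP {R : Type} (t : Tree' R) : 1 ≤ sizeP t := by
  cases t with
  | node r ts => rw [sizeP_node]; omega

theorem sum_set_real (l : List ℝ) (i : ℕ) (hi : i < l.length) (a : ℝ) :
    (l.set i a).sum = l.sum - l[i] + a := by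
  induction l generalizing i with
  | nil => simp at hi
  | cons x xs ih =>
    cases i with
    | zero => simp [List.set]; ring
    | succ n =>
      simp only [List.set, List.sum_cons, List.getElem_cons_succ]
      rw [ih n (by simpa using hi)]
      ring

/-- Replacement lemma: replacing a subtree by another program generated from the
same nonterminal yields a program with the corresponding cost. -/
theorem replace_lemma (G : TreeGrammar) (cost : G.R → ℝ) :
    ∀ p pn : Tree' G.R, IsSubtree pn p → ∀ X, G.GenFrom X p →
      ∀ pn', G.GenFrom (G.lhs pn.rootLabel) pn' →
        ∃ q, G.GenFrom X q ∧
          costP cost q = costP cost p - costP cost pn + costP cost pn' := by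
  intro p pn hsub
  induction hsub with
  | refl =>
    intro X hp pn' hpn'
    exact ⟨pn', ⟨hpn'.1, hp.2 ▸ hpn'.2⟩, by ring⟩
  | child r ts t ht hsubst ih =>
    intro X hp pn' hpn'
    obtain ⟨i, hi, hti⟩ := List.getElem_of_mem ht
    cases hp.1 with
    | node r' ts' hlen hwf hlhs =>
      have hwft : G.GenFrom (G.lhs t.rootLabel) t := ⟨hwf t ht, rfl⟩
      obtain ⟨q', hq', hcq'⟩ := ih _ hwft pn' hpn'
      refine ⟨.node r (ts.set i q'), ⟨?_, ?_⟩, ?_⟩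
      · refine TreeGrammar.WF.node r _ (by simpa using hlen) ?_ ?_
        · intro t' ht'
          rcases List.mem_or_eq_of_mem_set ht' with h | h
          · exact hwf t' h
          · exact h ▸ hq'.1
        · intro j hj
          have hj' : j < ts.length := by simpa using hj
          rw [List.getElem_set]
          split
          · next he =>
            subst he
            rw [hq'.2]
            have h5 := hlhs i hi
            rw [hti] at h5
            exact h5
          · exact hlhs j hj'
      · exact hp.2
      · rw [costP_node, costP_node, List.map_set, sum_set_real _ i
          (by simpa using hi), List.getElem_map, hti, hcq']
        ring

/-- Sets of trees of bounded size over a finite label type are finite. -/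
theorem finite_sizeP_le (R : Type) [Finite R] : ∀ N : ℕ, {t : Tree' R | sizeP t ≤ N}.Finite := by
  intro N
  induction N with
  | zero =>
    convert Set.finite_empty
    ext t
    simp only [Set.mem_setOf_eq, Set.mem_empty_iff_false, iff_false, not_le]
    exact one_le_sizeP t
  | succ N ih =>
    have hlist : {l : List (Tree' R) | l.length ≤ N ∧ ∀ t ∈ l, sizeP t ≤ N}.Finite := by
      have : Finite {t : Tree' R // sizeP t ≤ N} := ih.to_subtype
      have h2 : {l : List {t : Tree' R // sizeP t ≤ N} | l.length ≤ N}.Finite :=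
        List.finite_length_le _ N
      refine ((h2.image (List.map Subtype.val)).subset ?_)
      rintro l ⟨hlen, hmem⟩
      refine ⟨l.attach.map (fun x => ⟨x.1, hmem x.1 x.2⟩), by simpa using hlen, ?_⟩
      simp [List.map_map, Function.comp]
    have hfin : ((fun p : R × List (Tree' R) => Tree'.node p.1 p.2) ''
        (Set.univ ×ˢ {l | l.length ≤ N ∧ ∀ t ∈ l, sizeP t ≤ N})).Finite :=
      (Set.finite_univ.prod hlist).image _
    refine hfin.subset ?_
    rintro t ht
    cases t with
    | node r ts =>
      rw [Set.mem_setOf_eq, sizeP_node] at ht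
      have hlenle : ts.length ≤ (ts.map sizeP).sum := by
        have := List.length_le_sum_of_one_le (ts.map sizeP) (by
          intro i hi
          obtain ⟨t, -, rfl⟩ := List.mem_map.mp hi
          exact one_le_sizeP t)
        simpa using this
      have hmem2 : ts ∈ {l : List (Tree' R) | l.length ≤ N ∧ ∀ t ∈ l, sizeP t ≤ N} := by
        refine ⟨by omega, ?_⟩
        intro t htm
        have : sizeP t ≤ (ts.map sizeP).sum :=
          List.single_le_sum (fun x _ => Nat.zero_le x) _ (List.mem_map_of_mem (f := sizeP) htm)
        omega
      exact ⟨(r, ts), ⟨Set.mem_univ _, hmem2⟩, rfl⟩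

theorem sizeP_le_costP {R : Type} (cost : R → ℝ) (δ : ℝ) (hδ : ∀ r, δ ≤ cost r) :
    ∀ t : Tree' R, δ * sizeP t ≤ costP cost t := by
  refine Tree'.my_ind ?_
  intro r ts ih
  rw [costP_node, sizeP_node, Nat.cast_add, Nat.cast_one, mul_add, mul_one]
  refine add_le_add (hδ r) ?_
  have hcast : ((ts.map sizeP).sum : ℝ) = (ts.map fun t => (sizeP t : ℝ)).sum := by
    rw [Nat.cast_list_sum, List.map_map]; rfl
  rw [hcast, ← List.sum_map_mul_left]
  exact List.sum_le_sum ih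

/-- if a subprogram `pn` of `p` (generated from `Y`) has a successor wrt
`Y`, then `p` has a successor wrt `X`, and the successor cost gap of `p` is at most
that of `pn`. -/
theorem stmt13 (G : TreeGrammar) [Fintype G.Γ] [Fintype G.R] (cost : G.R → ℝ)
    (hpos : ∀ r, 0 < cost r) (X : G.Γ) (p pn : Tree' G.R)
    (hp : G.GenFrom X p) (hsub : IsSubtree pn p)
    (hsucc : ∃ pn' : Tree' G.R, IsSucc G cost (G.lhs pn.rootLabel) pn pn') :
    (∃ p' : Tree' G.R, IsSucc G cost X p p') ∧
      ∀ p' pn' : Tree' G.R, IsSucc G cost X p p' →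
        IsSucc G cost (G.lhs pn.rootLabel) pn pn' →
        costP cost p' - costP cost p ≤ costP cost pn' - costP cost pn := by
  have hne : Nonempty G.R := ⟨p.rootLabel⟩
  -- replacement: any successor of pn gives a program generated from X of larger cost
  have key : ∀ pn' : Tree' G.R, IsSucc G cost (G.lhs pn.rootLabel) pn pn' →
      ∃ q, G.GenFrom X q ∧
        costP cost q = costP cost p + (costP cost pn' - costP cost pn) := by
    intro pn' hpn'
    obtain ⟨q, hq, hcq⟩ := replace_lemma G cost p pn hsub X hp pn' hpn'.1
    exact ⟨q, hq, by linarith⟩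
  obtain ⟨pn0, hpn0⟩ := hsucc
  obtain ⟨q0, hq0, hcq0⟩ := key pn0 hpn0
  have hgap0 : costP cost p < costP cost q0 := by
    have := hpn0.2.1
    linarith
  -- existence of a successor of p wrt X
  have hex : ∃ p', IsSucc G cost X p p' := by
    set δ : ℝ := Finset.univ.inf' (Finset.univ_nonempty) cost with hδdef
    have hδpos : 0 < δ := by
      rw [hδdef, Finset.lt_inf'_iff]
      exact fun r _ => hpos r
    have hδle : ∀ r, δ ≤ cost r := fun r =>
      Finset.inf'_le cost (Finset.mem_univ r)
    set C : Set (Tree' G.R) :=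
      {q | G.GenFrom X q ∧ costP cost p < costP cost q ∧ costP cost q ≤ costP cost q0} with hC
    have hCfin : C.Finite := by
      refine (finite_sizeP_le G.R (Nat.ceil (costP cost q0 / δ))).subset ?_
      rintro q ⟨-, -, hle⟩
      have h1 : δ * sizeP q ≤ costP cost q := sizeP_le_costP cost δ hδle q
      have h2 : (sizeP q : ℝ) ≤ costP cost q0 / δ := by
        rw [le_div_iff₀ hδpos]
        linarith [mul_comm δ (sizeP q : ℝ)]
      exact_mod_cast h2.trans (Nat.le_ceil _)
    have hCne : C.Nonempty := ⟨q0, hq0, hgap0, le_refl _⟩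
    obtain ⟨q', ⟨hq'G, hq'gt, hq'le⟩, hq'min⟩ :=
      Set.exists_min_image C (costP cost) hCfin hCne
    refine ⟨q', hq'G, hq'gt, ?_⟩
    intro p'' hp'' ⟨h1, h2⟩
    have : costP cost q' ≤ costP cost p'' :=
      hq'min p'' ⟨hp'', h1, le_of_lt (h2.trans_le hq'le)⟩
    linarith
  refine ⟨hex, ?_⟩
  intro p' pn' hp' hpn'
  obtain ⟨q, hq, hcq⟩ := key pn' hpn'
  by_contra hcon
  push_neg at hcon
  have h1 : costP cost p < costP cost q := by
    have := hpn'.2.1; linarith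
  have h2 : costP cost q < costP cost p' := by linarith
  exact hp'.2.2 q hq ⟨h1, h2⟩
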